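/- Let F be a field of characteristic zero and f ∈ F(t, x) a bivariate rational function. Write f = D_x(g) + a/b via Hermite reduction, where g ∈ F(t, x), a, b ∈ F(t)[x], gcd(a, b) = 1, deg_x(a) < deg_x(b), and b squarefree in x over F(t). Then for any nonzero L = Σ_{i=0}^ρ ℓ_i S_t^i ∈ F(t)⟨S_t⟩ (where S_t is the shift t ↦ t+1), the following are equivalent: (i) L(a/b) = D_x(h) for some h ∈ F(t, x); (ii) L(a/b) = 0. -/

import Mathlib

open Polynomial

/-- The derivative `d/dx` on `K(x)` (with constants `K`), by the quotient rule on the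
reduced representation. -/
noncomputable def ratDeriv {K : Type*} [Field K] (f : RatFunc K) : RatFunc K :=
  (algebraMap K[X] (RatFunc K) (derivative f.num) * algebraMap K[X] (RatFunc K) f.denom -
      algebraMap K[X] (RatFunc K) f.num * algebraMap K[X] (RatFunc K) (derivative f.denom)) /
    algebraMap K[X] (RatFunc K) (f.denom ^ 2)

/-- The shift `S_t : t ↦ t + 1` on `F(t)`, as a ring homomorphism. -/
noncomputable def shiftRF {F : Type*} [Field F] : RatFunc F →+* RatFunc F :=
  RatFunc.mapRingHom (Polynomial.eval₂RingHom (Polynomial.C : F →+* F[X]) (X + C 1)) (by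
    intro q hq
    simp only [Submonoid.mem_comap, coe_eval₂RingHom]
    refine mem_nonZeroDivisors_of_ne_zero fun h0 => nonZeroDivisors.ne_zero hq ?_
    have hcomp : q.comp (X + C 1) = 0 := h0
    have h2 := congrArg (fun r => r.comp (X - C 1)) hcomp
    simpa [Polynomial.comp_assoc, Polynomial.add_comp, Polynomial.X_comp,
      Polynomial.C_comp, sub_add_cancel] using h2)

section NiceAux

variable {K : Type*} [Field K]

/-- `f` is a proper fraction with squarefree denominator (not necessarily reduced). -/
def IsNice (f : RatFunc K) : Prop :=
  ∃ p q : K[X], q ≠ 0 ∧ Squarefree q ∧ p.degree < q.degree ∧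
    f * algebraMap K[X] (RatFunc K) q = algebraMap K[X] (RatFunc K) p

theorem isNice_zero : IsNice (0 : RatFunc K) :=
  ⟨0, 1, one_ne_zero, squarefree_one, by simp [degree_one], by simp⟩

theorem IsNice.add {f₁ f₂ : RatFunc K} (h₁ : IsNice f₁) (h₂ : IsNice f₂) :
    IsNice (f₁ + f₂) := by
  obtain ⟨p₁, q₁, hq₁, hsf₁, hd₁, he₁⟩ := h₁
  obtain ⟨p₂, q₂, hq₂, hsf₂, hd₂, he₂⟩ := h₂
  classical
  set d := EuclideanDomain.gcd q₁ q₂ with hd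
  obtain ⟨r, hr⟩ : d ∣ q₂ := EuclideanDomain.gcd_dvd_right q₁ q₂
  obtain ⟨s, hs⟩ : d ∣ q₁ := EuclideanDomain.gcd_dvd_left q₁ q₂
  have hr0 : r ≠ 0 := by rintro rfl; simp at hr; exact hq₂ hr
  have hq1r : q₁ * r ≠ 0 := mul_ne_zero hq₁ hr0
  have hq1rq2s : q₁ * r = q₂ * s := by
    rw [hr, hs]; ring
  have hrel : IsRelPrime q₁ r := by
    intro c hc1 hc2
    by_contra hcu
    have hc0 : c ≠ 0 := fun h => hq₁ (by simpa [h] using hc1)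
    obtain ⟨π, hπ, hπc⟩ := WfDvdMonoid.exists_irreducible_factor hcu hc0
    have hπq1 : π ∣ q₁ := hπc.trans hc1
    have hπr : π ∣ r := hπc.trans hc2
    have hπgcd : π ∣ d := EuclideanDomain.dvd_gcd hπq1 (hπr.trans ⟨d, by rw [hr]; ring⟩)
    have : π * π ∣ q₂ := by
      rw [hr]; exact mul_dvd_mul hπgcd hπr
    exact hπ.not_isUnit (hsf₂ π this)
  refine ⟨p₁ * r + p₂ * s, q₁ * r, hq1r, ?_, ?_, ?_⟩
  · exact squarefree_mul_iff.mpr ⟨hrel, hsf₁, hsf₂.squarefree_of_dvd ⟨d, by rw [hr]; ring⟩⟩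
  · have hrb : (r : K[X]).degree ≠ ⊥ := by simpa [degree_eq_bot] using hr0
    have hsb : (s : K[X]).degree ≠ ⊥ := by
      have hs0 : s ≠ 0 := fun h => hq₁ (by simpa [h] using hs)
      simpa [degree_eq_bot] using hs0
    have h1 : (p₁ * r).degree < (q₁ * r).degree := by
      rw [degree_mul, degree_mul]
      exact WithBot.add_lt_add_right hrb hd₁
    have h2 : (p₂ * s).degree < (q₁ * r).degree := by
      rw [hq1rq2s, degree_mul, degree_mul]
      exact WithBot.add_lt_add_right hsb hd₂
    exact lt_of_le_of_lt (degree_add_le _ _) (max_lt h1 h2)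
  · rw [map_add, map_mul, add_mul]
    have e1 : f₁ * (algebraMap K[X] (RatFunc K) q₁ * algebraMap K[X] (RatFunc K) r)
        = algebraMap K[X] (RatFunc K) (p₁ * r) := by
      rw [← mul_assoc, he₁, ← map_mul]
    have e2 : f₂ * (algebraMap K[X] (RatFunc K) q₁ * algebraMap K[X] (RatFunc K) r)
        = algebraMap K[X] (RatFunc K) (p₂ * s) := by
      rw [← map_mul, hq1rq2s, map_mul, ← mul_assoc, he₂, ← map_mul]
    rw [e1, e2, ← map_add]

end NiceAux

theorem eq_zero_of_isNice_ratDeriv {K : Type*} [Field K] [CharZero K]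
    {f h : RatFunc K} (hn : IsNice f) (hd : f = ratDeriv h) : f = 0 := by
  obtain ⟨P, Q, hQ0, hQsf, hPQ, hPQe⟩ := hn
  set p := h.num with hp
  set q := h.denom with hqdef
  have hq0 : q ≠ 0 := h.denom_ne_zero
  set N : K[X] := derivative p * q - p * derivative q with hN
  have hinj : Function.Injective (algebraMap K[X] (RatFunc K)) :=
    IsFractionRing.injective _ _
  have hderiv : ratDeriv h
      = algebraMap K[X] (RatFunc K) N / algebraMap K[X] (RatFunc K) (q ^ 2) := by
    rw [ratDeriv, hN]
    rw [map_sub, map_mul, map_mul]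
  have hq2ne : algebraMap K[X] (RatFunc K) (q ^ 2) ≠ 0 := by
    intro hh
    exact pow_ne_zero 2 hq0 (hinj (by simpa using hh))
  have h1 : algebraMap K[X] (RatFunc K) N / algebraMap K[X] (RatFunc K) (q ^ 2) *
      algebraMap K[X] (RatFunc K) Q = algebraMap K[X] (RatFunc K) P := by
    rw [← hderiv, ← hd]; exact hPQe
  have hkey : N * Q = P * q ^ 2 := by
    apply hinj
    rw [map_mul, map_mul]
    rw [div_mul_eq_mul_div, div_eq_iff hq2ne] at h1
    exact h1
  by_cases hu : IsUnit q
  · -- `q = 1`, so `ratDeriv h` is a polynomial; properness forces it to vanish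
    have hq1 : q = 1 := (h.monic_denom).eq_one_of_isUnit hu
    have hN' : N = derivative p := by rw [hN, hq1]; simp
    have hp0 : derivative p = 0 := by
      by_contra hp0
      have hkey' : derivative p * Q = P := by
        rw [← hN', hkey, hq1]; ring
      have : Q.degree ≤ (derivative p * Q).degree := by
        rw [degree_mul]
        calc Q.degree = 0 + Q.degree := by rw [zero_add]
          _ ≤ (derivative p).degree + Q.degree := by
              exact add_le_add (zero_le_degree_iff.mpr hp0) le_rfl
      rw [hkey'] at this
      exact absurd hPQ (not_lt.mpr this)
    have : N = 0 := by rw [hN', hp0]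
    rw [hd, hderiv, this, map_zero, zero_div]
  · exfalso
    obtain ⟨π, hπirr, hπq⟩ := WfDvdMonoid.exists_irreducible_factor hu hq0
    have hπ : Prime π := hπirr.prime
    have hπ0 : π ≠ 0 := hπ.ne_zero
    have hfin := FiniteMultiplicity.of_not_isUnit hπirr.not_isUnit hq0
    obtain ⟨u, hqu, hπu⟩ := hfin.exists_eq_pow_mul_and_not_dvd
    have hmne : multiplicity π q ≠ 0 := multiplicity_ne_zero.mpr hπq
    obtain ⟨m, hm'⟩ : ∃ m, multiplicity π q = m + 1 := ⟨multiplicity π q - 1, by omega⟩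
    rw [hm'] at hqu
    -- no irreducible divides a nonzero constant, or its own derivative
    have hdegπ : ¬ π.degree ≤ 0 := by
      intro hdπ
      have : IsUnit π := by
        rw [eq_C_of_degree_le_zero hdπ]
        refine isUnit_C.mpr (isUnit_iff_ne_zero.mpr ?_)
        intro hc
        exact hπ0 (by rw [eq_C_of_degree_le_zero hdπ, hc, map_zero])
      exact hπirr.not_isUnit this
    have hπ'0 : derivative π ≠ 0 := by
      intro hc
      have : π.natDegree = 0 := natDegree_eq_zero_of_derivative_eq_zero hc
      exact hdegπ (by rw [eq_C_of_natDegree_eq_zero this]; exact degree_C_le)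
    set w : K[X] := π * (derivative p * u) - p * (C ((m+1 : ℕ) : K) * derivative π * u)
        - π * (p * derivative u) with hw
    have hNw : N = π ^ m * w := by
      rw [hN, hw, hqu, derivative_mul, derivative_pow]
      simp only [Nat.add_sub_cancel]
      ring
    have hπw : ¬ π ∣ w := by
      intro hπw
      have hdvd : π ∣ p * (C ((m+1 : ℕ) : K) * derivative π * u) := by
        have : p * (C ((m+1 : ℕ) : K) * derivative π * u)
            = π * (derivative p * u) - π * (p * derivative u) - w := by rw [hw]; ring
        rw [this]
        exact dvd_sub (dvd_sub (Dvd.intro _ rfl) (Dvd.intro _ rfl)) hπw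
      rcases hπ.dvd_mul.mp hdvd with hπp | hrest
      · exact hπirr.not_isUnit ((h.isCoprime_num_denom).isUnit_of_dvd' hπp hπq)
      rcases hπ.dvd_mul.mp hrest with hrest2 | hπu'
      rcases hπ.dvd_mul.mp hrest2 with hπc | hππ'
      · have hc0 : ((m+1 : ℕ) : K) ≠ 0 := Nat.cast_ne_zero.mpr (Nat.succ_ne_zero m)
        exact hdegπ ((degree_le_of_dvd hπc (C_ne_zero.mpr hc0)).trans degree_C_le)
      · exact absurd (degree_le_of_dvd hππ' hπ'0) (not_le.mpr (degree_derivative_lt hπ0))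
      · exact hπu hπu'
    have hbig : π ^ m * π ^ (m + 2) ∣ π ^ m * (w * Q) := by
      rw [← pow_add]
      exact ⟨P * u ^ 2, by rw [← mul_assoc, ← hNw, hkey, hqu]; ring⟩
    have hcan : π ^ (m + 2) ∣ w * Q :=
      (mul_dvd_mul_iff_left (pow_ne_zero m hπ0)).mp hbig
    have hQd : π ^ (m + 2) ∣ Q := hπ.pow_dvd_of_dvd_mul_left _ hπw hcan
    have hsq : π * π ∣ Q := by
      rw [← sq]
      exact (pow_dvd_pow π (by omega)).trans hQd
    exact hπirr.not_isUnit (hQsf π hsq)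

/-- Let `f ∈ F(t, x)` with Hermite reduction `f = D_x(g) + a/b` (`gcd(a, b) = 1`,
`deg_x a < deg_x b`, `b` squarefree in `x` over `F(t)`). For any nonzero
`L = Σ_{i=0}^ρ ℓ_i S_t^i` with `ℓ_i ∈ F(t)`, the following are equivalent:
`L(a/b)` is a derivative `D_x(h)` of some `h ∈ F(t, x)`, and `L(a/b) = 0`.
Here `F(t, x)` is realized as `Kt(x)` with `Kt = F(t)`, and
`σ_t^i(a/b) = (σ_t^i a)/(σ_t^i b)` acts on coefficients via the shift on `F(t)`. -/
theorem telescoper_iff_separable_rational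
    {F : Type*} [Field F] [CharZero F]
    (a b : Polynomial (RatFunc F)) (hb : b ≠ 0) (hab : IsCoprime a b)
    (hdeg : a.degree < b.degree) (hsf : Squarefree b)
    (f g : RatFunc (RatFunc F))
    (hf : f = ratDeriv g + algebraMap (Polynomial (RatFunc F)) _ a /
      algebraMap (Polynomial (RatFunc F)) _ b)
    (ρ : ℕ) (ℓ : ℕ → RatFunc F) (hne : ∃ i ≤ ρ, ℓ i ≠ 0)
    (Lf : RatFunc (RatFunc F))
    (hLf : Lf = ∑ i ∈ Finset.range (ρ + 1),
      algebraMap (RatFunc F) (RatFunc (RatFunc F)) (ℓ i) *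
        (algebraMap (Polynomial (RatFunc F)) _ (a.map (shiftRF ^ i)) /
          algebraMap (Polynomial (RatFunc F)) _ (b.map (shiftRF ^ i)))) :
    (∃ h : RatFunc (RatFunc F), Lf = ratDeriv h) ↔ Lf = 0 := by
  haveI : CharZero (RatFunc F) :=
    charZero_of_injective_algebraMap (IsFractionRing.injective F[X] (RatFunc F))
  constructor
  · rintro ⟨h, hh⟩
    -- `Lf` is a sum of nice fractions, hence nice
    have hnice : IsNice Lf := by
      rw [hLf]
      refine Finset.sum_induction _ IsNice (fun x y hx hy => hx.add hy) isNice_zero ?_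
    -- each summand is nice
      intro i _
      set φ : RatFunc F →+* RatFunc F := (shiftRF ^ i) with hφ
      have hφinj : Function.Injective φ := φ.injective
      have hB0 : b.map φ ≠ 0 := by
        intro hc
        exact hb (Polynomial.map_eq_zero_iff hφinj |>.mp hc)
      have hBdeg : (b.map φ).degree = b.degree := degree_map_eq_of_injective hφinj b
      have hAdeg : (a.map φ).degree = a.degree := degree_map_eq_of_injective hφinj a
      have hBsf : Squarefree (b.map φ) :=
        ((PerfectField.separable_iff_squarefree.mpr hsf).map).squarefree
      have hB0' : algebraMap (Polynomial (RatFunc F)) (RatFunc (RatFunc F)) (b.map φ) ≠ 0 := by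
        intro hc
        exact hB0 (IsFractionRing.injective (Polynomial (RatFunc F)) (RatFunc (RatFunc F))
          (by simpa using hc))
      refine ⟨Polynomial.C (ℓ i) * a.map φ, b.map φ, hB0, hBsf, ?_, ?_⟩
      · calc (Polynomial.C (ℓ i) * a.map φ).degree
            ≤ (Polynomial.C (ℓ i)).degree + (a.map φ).degree := degree_mul_le _ _
          _ ≤ 0 + (a.map φ).degree := add_le_add degree_C_le le_rfl
          _ = a.degree := by rw [zero_add, hAdeg]
          _ < b.degree := hdeg
          _ = (b.map φ).degree := hBdeg.symm
      · have halg : algebraMap (RatFunc F) (RatFunc (RatFunc F)) (ℓ i)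
            = algebraMap (Polynomial (RatFunc F)) (RatFunc (RatFunc F))
                (Polynomial.C (ℓ i)) := rfl
        rw [halg, mul_assoc, div_mul_cancel₀ _ hB0', ← map_mul]
    exact eq_zero_of_isNice_ratDeriv hnice hh
  · intro h0
    refine ⟨0, ?_⟩
    rw [h0, ratDeriv]
    simp
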